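/- For all n ≥ 0, Σ_{k≥0} p(n - k(6k+1)) = (S_3(n) + G_3(n) + R(n))/2, where R(n) is the number of partitions of n with nonnegative rank (largest part minus number of parts ≥ 0). -/

import Mathlib

open scoped Classical

/-- `pI m` is the number of partitions of `m`, with `pI m = 0` for `m < 0`. -/
noncomputable def pI (m : ℤ) : ℕ := if 0 ≤ m then Nat.card (Nat.Partition m.toNat) else 0

/-- The `k`-th triangular number. -/
def T (k : ℕ) : ℕ := k * (k + 1) / 2

/-- The least `r`-gap of a partition: the smallest positive integer appearing
fewer than `r` times as a part; `gap 0 = ⊤` by convention. -/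
noncomputable def gap (r : ℕ) {n : ℕ} (lam : Nat.Partition n) : ℕ∞ :=
  if r = 0 then ⊤ else (sInf {i : ℕ | 0 < i ∧ lam.parts.count i < r} : ℕ)

/-- `S r n` is the sum of the least `r`-gaps over all partitions of `n`. -/
noncomputable def S (r n : ℕ) : ℕ := ∑ lam : Nat.Partition n, (gap r lam).toNat

/-- `G r n` is the number of partitions `lam` of `n` with `gap r lam < gap (r-1) lam`. -/
noncomputable def G (r n : ℕ) : ℕ :=
  Nat.card {lam : Nat.Partition n // gap r lam < gap (r-1) lam}

/-- `U r n` is the number of partitions of `n` into parts not congruent to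
`0`, `r`, or `3r` modulo `4r`. -/
noncomputable def U (r n : ℕ) : ℕ :=
  Nat.card {lam : Nat.Partition n //
    ∀ i ∈ lam.parts, i % (4*r) ≠ 0 ∧ i % (4*r) ≠ r % (4*r) ∧ i % (4*r) ≠ (3*r) % (4*r)}

/-- `qD m` is the number of partitions of `m` into distinct parts. -/
noncomputable def qD (m : ℕ) : ℕ := Nat.card {lam : Nat.Partition m // lam.parts.Nodup}

/-- `pe n` is the number of partitions of `n` into an even number of parts. -/
noncomputable def pe (n : ℕ) : ℕ :=
  Nat.card {lam : Nat.Partition n // Even (Multiset.card lam.parts)}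

/-- `R n` is the number of partitions of `n` with nonnegative rank
(largest part minus number of parts is `≥ 0`). -/
noncomputable def R (n : ℕ) : ℕ :=
  Nat.card {lam : Nat.Partition n // (Multiset.card lam.parts : ℤ) ≤ (lam.parts.sup : ℤ)}

/-- The crank of a partition. -/
noncomputable def crank {n : ℕ} (lam : Nat.Partition n) : ℤ :=
  if lam.parts.count 1 = 0 then (lam.parts.sup : ℤ)
  else (Multiset.card (lam.parts.filter (fun x => lam.parts.count 1 < x)) : ℤ)
        - lam.parts.count 1

/-- `C n` is the number of partitions of `n` with nonnegative crank. -/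
noncomputable def C (n : ℕ) : ℕ := Nat.card {lam : Nat.Partition n // 0 ≤ crank lam}

lemma pI_nonneg (a : ℕ) : pI (a : ℤ) = Nat.card (Nat.Partition a) := by simp [pI]

lemma pI_neg {m : ℤ} (h : m < 0) : pI m = 0 := by simp [pI, not_le.2 h]

/-- `g r lam` : the least `r`-gap as a natural number. -/
noncomputable def g (r : ℕ) {n : ℕ} (lam : Nat.Partition n) : ℕ :=
  sInf {i : ℕ | 0 < i ∧ lam.parts.count i < r}

lemma mem_parts_le {n : ℕ} (lam : Nat.Partition n) {i : ℕ} (hi : i ∈ lam.parts) : i ≤ n := by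
  have := Multiset.single_le_sum (s := lam.parts) (fun x _ => Nat.zero_le x) i hi
  simpa [lam.parts_sum] using this

lemma gap_eq {r n : ℕ} (hr : r ≠ 0) (lam : Nat.Partition n) : gap r lam = (g r lam : ℕ∞) := by
  simp [gap, g, hr]

lemma g_mem {r n : ℕ} (hr : 0 < r) (lam : Nat.Partition n) :
    0 < g r lam ∧ lam.parts.count (g r lam) < r := by
  have hne : {i : ℕ | 0 < i ∧ lam.parts.count i < r}.Nonempty := by
    refine ⟨n + 1, Nat.succ_pos n, ?_⟩
    have : (n+1) ∉ lam.parts := fun h => by have := mem_parts_le lam h; omega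
    simp [Multiset.count_eq_zero_of_notMem this, hr]
  exact Nat.sInf_mem hne

lemma g_le {r n : ℕ} (hr : 0 < r) (lam : Nat.Partition n) : g r lam ≤ n + 1 := by
  apply Nat.sInf_le
  have : (n+1) ∉ lam.parts := fun h => by have := mem_parts_le lam h; omega
  simp [Multiset.count_eq_zero_of_notMem this, hr]

lemma le_g_iff {r n : ℕ} (hr : 0 < r) (lam : Nat.Partition n) (m : ℕ) :
    m ≤ g r lam ↔ ∀ i, 0 < i → i < m → r ≤ lam.parts.count i := by
  constructor
  · intro h i hi him
    by_contra hc
    have : g r lam ≤ i := Nat.sInf_le ⟨hi, by omega⟩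
    omega
  · intro h
    by_contra hc
    obtain ⟨h1, h2⟩ := g_mem hr lam
    have := h _ h1 (by omega)
    omega

/-- The multiset with `r` copies of each of `1, …, m-1`. -/
def Xm (r m : ℕ) : Multiset ℕ := r • (Finset.Ico 1 m).val

lemma Xm_pos {r m : ℕ} : ∀ i ∈ Xm r m, 0 < i := by
  intro i hi
  rw [Xm, Multiset.mem_nsmul] at hi
  · have := hi.2; rw [Finset.mem_val, Finset.mem_Ico] at this; omega

lemma count_Xm (r m i : ℕ) : (Xm r m).count i = if 1 ≤ i ∧ i < m then r else 0 := by
  rw [Xm, Multiset.count_nsmul]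
  rcases em (1 ≤ i ∧ i < m) with h | h
  · rw [if_pos h, Multiset.count_eq_one_of_mem (Finset.Ico 1 m).nodup
      (by simp only [Finset.mem_val, Finset.mem_Ico]; omega), mul_one]
  · rw [if_neg h, Multiset.count_eq_zero_of_notMem
      (by simp only [Finset.mem_val, Finset.mem_Ico]; omega), mul_zero]

lemma Xm_le_iff {r n m : ℕ} (lam : Nat.Partition n) :
    Xm r m ≤ lam.parts ↔ ∀ i, 0 < i → i < m → r ≤ lam.parts.count i := by
  rw [Multiset.le_iff_count]
  constructor
  · intro h i h1 h2
    have := h i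
    rw [count_Xm, if_pos ⟨h1, h2⟩] at this
    exact this
  · intro h i
    rw [count_Xm]
    split
    · next hi => exact h i hi.1 hi.2
    · exact Nat.zero_le _

lemma le_g_iff' {r n : ℕ} (hr : 0 < r) (lam : Nat.Partition n) (m : ℕ) :
    m ≤ g r lam ↔ Xm r m ≤ lam.parts := by
  rw [le_g_iff hr, Xm_le_iff]

lemma card_contains (X : Multiset ℕ) (hX : ∀ i ∈ X, 0 < i) (n : ℕ) :
    Nat.card {lam : Nat.Partition n // X ≤ lam.parts} = pI ((n : ℤ) - X.sum) := by
  rcases le_or_gt X.sum n with h | h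
  · have e : {lam : Nat.Partition n // X ≤ lam.parts} ≃ Nat.Partition (n - X.sum) :=
    { toFun := fun lam => ⟨lam.1.parts - X,
        fun {i} hi => lam.1.parts_pos (Multiset.mem_of_le (Multiset.sub_le_self _ _) hi),
        by
          have h2 : (lam.1.parts - X) + X = lam.1.parts := tsub_add_cancel_of_le lam.2
          have h3 : (lam.1.parts - X).sum + X.sum = n := by
            rw [← Multiset.sum_add, h2, lam.1.parts_sum]
          omega⟩
      invFun := fun mu => ⟨⟨mu.parts + X,
        fun {i} hi => by
          rcases Multiset.mem_add.1 hi with h' | h'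
          · exact mu.parts_pos h'
          · exact hX i h',
        by rw [Multiset.sum_add, mu.parts_sum]; omega⟩, Multiset.le_add_left _ _⟩
      left_inv := fun lam => by
        apply Subtype.ext; apply Nat.Partition.ext
        exact tsub_add_cancel_of_le lam.2
      right_inv := fun mu => by
        apply Nat.Partition.ext
        exact add_tsub_cancel_right _ _ }
    rw [Nat.card_congr e]
    have : (n : ℤ) - X.sum = ((n - X.sum : ℕ) : ℤ) := by omega
    rw [this, pI_nonneg]
  · have : IsEmpty {lam : Nat.Partition n // X ≤ lam.parts} := by
      constructor; rintro ⟨lam, hle⟩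
      obtain ⟨u, hu⟩ := Multiset.le_iff_exists_add.1 hle
      have : lam.parts.sum = X.sum + u.sum := by rw [hu, Multiset.sum_add]
      rw [lam.parts_sum] at this; omega
    rw [Nat.card_of_isEmpty, pI_neg]; omega

lemma sum_indicator_eq_card {n : ℕ} (p : Nat.Partition n → Prop) [DecidablePred p] :
    (∑ lam : Nat.Partition n, if p lam then 1 else 0) = Nat.card {lam : Nat.Partition n // p lam} := by
  rw [Nat.card_eq_fintype_card, Fintype.card_subtype, Finset.card_filter]

lemma g_as_sum {n : ℕ} (lam : Nat.Partition n) :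
    g 3 lam = ∑ m ∈ Finset.range (n+2), if 1 ≤ m ∧ m ≤ g 3 lam then 1 else 0 := by
  rw [← Finset.card_filter]
  have : (Finset.range (n+2)).filter (fun m => 1 ≤ m ∧ m ≤ g 3 lam) = Finset.Icc 1 (g 3 lam) := by
    ext m
    have := g_le (by norm_num : (0:ℕ) < 3) lam
    simp only [Finset.mem_filter, Finset.mem_range, Finset.mem_Icc]
    omega
  rw [this, Nat.card_Icc]
  omega

set_option maxHeartbeats 1000000 in
lemma S_eq (n : ℕ) :
    S 3 n = ∑ k ∈ Finset.range (n+1), pI ((n : ℤ) - ((Xm 3 (k+1)).sum : ℕ)) := by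
  have h1 : S 3 n = ∑ lam : Nat.Partition n, g 3 lam := by
    unfold S
    apply Finset.sum_congr rfl
    intro lam _
    rw [gap_eq (by norm_num)]
    simp
  rw [h1]
  have h2 : ∑ lam : Nat.Partition n, g 3 lam
      = ∑ m ∈ Finset.range (n+2), ∑ lam : Nat.Partition n, if 1 ≤ m ∧ m ≤ g 3 lam then 1 else 0 := by
    rw [Finset.sum_comm]
    exact Finset.sum_congr rfl fun lam _ => g_as_sum lam
  rw [h2, Finset.sum_range_succ']
  have h0 : (∑ lam : Nat.Partition n, if 1 ≤ 0 ∧ 0 ≤ g 3 lam then 1 else 0) = 0 := by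
    simp
  rw [h0, add_zero]
  apply Finset.sum_congr rfl
  intro k _
  have h3 : ∀ lam : Nat.Partition n, (1 ≤ k+1 ∧ k+1 ≤ g 3 lam) ↔ Xm 3 (k+1) ≤ lam.parts := by
    intro lam
    rw [← le_g_iff' (by norm_num : (0:ℕ) < 3) lam (k+1)]
    omega
  calc (∑ lam : Nat.Partition n, if 1 ≤ k+1 ∧ k+1 ≤ g 3 lam then 1 else 0)
      = ∑ lam : Nat.Partition n, if Xm 3 (k+1) ≤ lam.parts then 1 else 0 := by
        apply Finset.sum_congr rfl; intro lam _; simp only [h3]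
    _ = Nat.card {lam : Nat.Partition n // Xm 3 (k+1) ≤ lam.parts} := sum_indicator_eq_card _
    _ = pI ((n : ℤ) - ((Xm 3 (k+1)).sum : ℕ)) := card_contains _ Xm_pos n

lemma Xm_succ (r m : ℕ) (hm : 1 ≤ m) :
    Xm r (m+1) = Xm r m + Multiset.replicate r m := by
  ext i
  rw [Multiset.count_add, count_Xm, count_Xm, Multiset.count_replicate]
  rcases em (m = i) with rfl | h
  · rw [if_pos rfl, if_pos ⟨hm, by omega⟩, if_neg (by omega)]; omega
  · rw [if_neg h]
    rcases em (1 ≤ i ∧ i < m) with h2 | h2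
    · rw [if_pos h2, if_pos ⟨h2.1, by omega⟩]; omega
    · rw [if_neg h2, if_neg (by intro hc; exact h (by omega))]

lemma natcard_eq_filter {n : ℕ} (p : Nat.Partition n → Prop) [DecidablePred p] :
    Nat.card {lam : Nat.Partition n // p lam} = (Finset.univ.filter p).card := by
  rw [Nat.card_eq_fintype_card, Fintype.card_subtype]

lemma add_replicate_le_iff {n m r c : ℕ} (lam : Nat.Partition n) (hm : 1 ≤ m) :
    Xm r m + Multiset.replicate c m ≤ lam.parts ↔
      Xm r m ≤ lam.parts ∧ c ≤ lam.parts.count m := by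
  have hXm : (Xm r m).count m = 0 := by rw [count_Xm]; simp
  constructor
  · intro h
    rw [Multiset.le_iff_count] at h
    constructor
    · rw [Multiset.le_iff_count]
      intro i
      have := h i
      rw [Multiset.count_add, Multiset.count_replicate] at this
      omega
    · have := h m
      rw [Multiset.count_add, Multiset.count_replicate, if_pos rfl, hXm] at this
      omega
  · rintro ⟨h1, h2⟩
    rw [Multiset.le_iff_count]
    intro i
    rw [Multiset.count_add, Multiset.count_replicate]
    rw [Multiset.le_iff_count] at h1
    have := h1 i
    rcases em (m = i) with rfl | h
    · rw [if_pos rfl]; omega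
    · rw [if_neg h]; omega

lemma card_Q (n m : ℕ) (hm : 1 ≤ m) :
    ((Nat.card {lam : Nat.Partition n //
        Xm 3 m ≤ lam.parts ∧ lam.parts.count m = 2}) : ℤ)
      = pI ((n:ℤ) - ((Xm 3 m).sum + 2*m)) - pI ((n:ℤ) - (Xm 3 (m+1)).sum) := by
  classical
  set Y : Multiset ℕ := Xm 3 m + Multiset.replicate 2 m with hY
  have hiff : ∀ lam : Nat.Partition n,
      (Xm 3 m ≤ lam.parts ∧ lam.parts.count m = 2) ↔
      (Y ≤ lam.parts ∧ ¬ (Xm 3 (m+1) ≤ lam.parts)) := by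
    intro lam
    rw [hY, add_replicate_le_iff lam hm, Xm_succ 3 m hm, add_replicate_le_iff lam hm]
    constructor
    · rintro ⟨h1, h2⟩; exact ⟨⟨h1, by omega⟩, by rintro ⟨-, h3⟩; omega⟩
    · rintro ⟨⟨h1, h2⟩, h3⟩
      refine ⟨h1, ?_⟩
      have hc : ¬ (3 ≤ lam.parts.count m) := fun hc => h3 ⟨h1, hc⟩
      omega
  have hcongr : Nat.card {lam : Nat.Partition n // Xm 3 m ≤ lam.parts ∧ lam.parts.count m = 2}
      = Nat.card {lam : Nat.Partition n // Y ≤ lam.parts ∧ ¬ (Xm 3 (m+1) ≤ lam.parts)} :=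
    Nat.card_congr (Equiv.subtypeEquivRight hiff)
  rw [hcongr, natcard_eq_filter]
  have hsub : (Finset.univ.filter (fun lam : Nat.Partition n => Xm 3 (m+1) ≤ lam.parts))
      ⊆ (Finset.univ.filter (fun lam : Nat.Partition n => Y ≤ lam.parts)) := by
    intro lam h
    rw [Finset.mem_filter] at *
    refine ⟨h.1, ?_⟩
    refine le_trans ?_ h.2
    rw [hY, Xm_succ 3 m hm]
    exact add_le_add (le_refl _) ((Multiset.replicate_le_replicate m).2 (by omega))
  have hset : (Finset.univ.filter
        (fun lam : Nat.Partition n => Y ≤ lam.parts ∧ ¬ (Xm 3 (m+1) ≤ lam.parts)))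
      = (Finset.univ.filter (fun lam : Nat.Partition n => Y ≤ lam.parts))
        \ (Finset.univ.filter (fun lam : Nat.Partition n => Xm 3 (m+1) ≤ lam.parts)) := by
    ext lam
    simp only [Finset.mem_filter, Finset.mem_sdiff, Finset.mem_univ, true_and]
  rw [hset, Finset.card_sdiff_of_subset hsub]
  have hYsum : (Y.sum : ℤ) = (Xm 3 m).sum + 2*m := by
    rw [hY, Multiset.sum_add, Multiset.sum_replicate]
    push_cast [smul_eq_mul]
    ring
  have e1 : ((Finset.univ.filter (fun lam : Nat.Partition n => Y ≤ lam.parts)).card : ℤ)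
      = pI ((n:ℤ) - ((Xm 3 m).sum + 2*m)) := by
    rw [← natcard_eq_filter, card_contains Y
      (by
        intro i hi
        rw [hY, Multiset.mem_add] at hi
        rcases hi with hi | hi
        · exact Xm_pos i hi
        · rw [Multiset.eq_of_mem_replicate hi]; omega) n, ← hYsum]
  have e2 : ((Finset.univ.filter (fun lam : Nat.Partition n => Xm 3 (m+1) ≤ lam.parts)).card : ℤ)
      = pI ((n:ℤ) - (Xm 3 (m+1)).sum) := by
    rw [← natcard_eq_filter, card_contains _ Xm_pos n]
  rw [Nat.cast_sub (Finset.card_le_card hsub), e1, e2]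

lemma key_QG {n : ℕ} (lam : Nat.Partition n) (m : ℕ) (hm : 1 ≤ m) :
    (Xm 3 m ≤ lam.parts ∧ lam.parts.count m = 2) ↔
      (g 3 lam = m ∧ g 3 lam < g 2 lam) := by
  constructor
  · rintro ⟨h1, h2⟩
    have hle : g 3 lam ≤ m := Nat.sInf_le ⟨by omega, by omega⟩
    have hge : m ≤ g 3 lam := (le_g_iff' (by norm_num) lam m).2 h1
    have hg3 : g 3 lam = m := le_antisymm hle hge
    refine ⟨hg3, ?_⟩
    have hg2 : m + 1 ≤ g 2 lam := by
      rw [le_g_iff (by norm_num)]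
      intro i hi him
      rcases em (i = m) with rfl | hne
      · omega
      · have := (Xm_le_iff (r := 3) (m := m) lam).1 h1 i hi (by omega)
        omega
    omega
  · rintro ⟨hg3, hlt⟩
    have hX : Xm 3 m ≤ lam.parts := (le_g_iff' (by norm_num : (0:ℕ) < 3) lam m).1 (by omega)
    have hcount3 := (g_mem (by norm_num : (0:ℕ) < 3) lam).2
    rw [hg3] at hcount3
    have hcount2 : 2 ≤ lam.parts.count m := by
      have h2 : m + 1 ≤ g 2 lam := by omega
      rw [le_g_iff (by norm_num)] at h2
      exact h2 m (by omega) (by omega)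
    exact ⟨hX, by omega⟩

lemma indicator_split {n : ℕ} (lam : Nat.Partition n) :
    (if g 3 lam < g 2 lam then (1:ℕ) else 0)
      = ∑ k ∈ Finset.range (n+1),
          if Xm 3 (k+1) ≤ lam.parts ∧ lam.parts.count (k+1) = 2 then 1 else 0 := by
  by_cases hP : g 3 lam < g 2 lam
  · rw [if_pos hP]
    have h1 : 1 ≤ g 3 lam := (g_mem (by norm_num) lam).1
    have h2 : g 3 lam ≤ n + 1 := g_le (by norm_num) lam
    rw [Finset.sum_eq_single (g 3 lam - 1)]
    · rw [if_pos]
      rw [key_QG lam (g 3 lam - 1 + 1) (by omega)]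
      exact ⟨by omega, hP⟩
    · intro b _ hb
      rw [if_neg]
      intro hc
      have := (key_QG lam (b+1) (by omega)).1 hc
      omega
    · intro hc
      exact absurd (Finset.mem_range.2 (by omega)) hc
  · rw [if_neg hP]
    symm
    apply Finset.sum_eq_zero
    intro k _
    rw [if_neg]
    intro hc
    exact hP ((key_QG lam (k+1) (by omega)).1 hc).2

lemma G_eq (n : ℕ) :
    ((G 3 n : ℤ)) = ∑ k ∈ Finset.range (n+1),
      ((pI ((n:ℤ) - (((Xm 3 (k+1)).sum : ℤ) + 2*((k+1 : ℕ) : ℤ))) : ℤ)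
        - (pI ((n:ℤ) - ((Xm 3 (k+1+1)).sum : ℤ)) : ℤ)) := by
  classical
  have hgap : ∀ lam : Nat.Partition n, (gap 3 lam < gap (3-1) lam ↔ g 3 lam < g 2 lam) := by
    intro lam
    have h32 : (3:ℕ) - 1 = 2 := rfl
    rw [h32, gap_eq (by norm_num) lam, gap_eq (by norm_num) lam]
    exact Nat.cast_lt (α := ℕ∞)
  have h0 : G 3 n = Nat.card {lam : Nat.Partition n // g 3 lam < g 2 lam} := by
    rw [G]
    exact Nat.card_congr (Equiv.subtypeEquivRight hgap)
  have h1 : Nat.card {lam : Nat.Partition n // g 3 lam < g 2 lam}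
      = ∑ lam : Nat.Partition n, if g 3 lam < g 2 lam then 1 else 0 :=
    (sum_indicator_eq_card _).symm
  have h2 : (∑ lam : Nat.Partition n, if g 3 lam < g 2 lam then (1:ℕ) else 0)
      = ∑ k ∈ Finset.range (n+1), ∑ lam : Nat.Partition n,
          if Xm 3 (k+1) ≤ lam.parts ∧ lam.parts.count (k+1) = 2 then 1 else 0 := by
    rw [← Finset.sum_comm]
    exact Finset.sum_congr rfl fun lam _ => indicator_split lam
  rw [h0, h1, h2, Nat.cast_sum]
  apply Finset.sum_congr rfl
  intro k _
  rw [sum_indicator_eq_card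
    (fun lam : Nat.Partition n => Xm 3 (k+1) ≤ lam.parts ∧ lam.parts.count (k+1) = 2)]
  exact card_Q n (k+1) (by omega)

/-- The generalized pentagonal-type numbers: `sfun m j = j*m + j*(3j-1)/2`. -/
def sfun (m : ℕ) : ℕ → ℕ
  | 0 => 0
  | (j+1) => sfun m j + (m + 3*j + 1)

lemma sfun_shift (m : ℕ) : ∀ j, sfun m (j+1) = (m+1) + sfun (m+3) j := by
  intro j
  induction j with
  | zero => simp [sfun]
  | succ j ih => rw [sfun, ih, sfun]; ring

lemma sfun_ge (m : ℕ) (hm : 1 ≤ m) : ∀ j, 2*j ≤ sfun m j := by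
  intro j
  induction j with
  | zero => simp [sfun]
  | succ j ih => rw [sfun]; omega

lemma Xm_sum_succ (m : ℕ) : (Xm 3 (m+1)).sum = (Xm 3 m).sum + 3*m := by
  rcases Nat.eq_zero_or_pos m with rfl | hm
  · have h1 : Xm 3 1 = 0 := by rw [Xm, Finset.Ico_self]; rfl
    have h0 : Xm 3 0 = 0 := by rw [Xm, Finset.Ico_eq_empty (by omega)]; rfl
    rw [h1, h0, mul_zero, add_zero]
  · rw [Xm_succ 3 m hm, Multiset.sum_add, Multiset.sum_replicate, smul_eq_mul]

lemma sfun_one (m : ℕ) : sfun 1 m = (Xm 3 m).sum + 2*m := by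
  induction m with
  | zero =>
      have h0 : Xm 3 0 = 0 := by rw [Xm, Finset.Ico_eq_empty (by omega)]; rfl
      simp [sfun, h0]
  | succ m ih => rw [sfun, ih, Xm_sum_succ]; ring

lemma sfun_even (k : ℕ) : sfun 1 (2*k) = k * (6*k+1) := by
  induction k with
  | zero => simp [sfun]
  | succ k ih =>
      have h : 2*(k+1) = (2*k+1)+1 := by ring
      rw [h, sfun, sfun, ih]
      have : (k+1) * (6*(k+1)+1) = k*(6*k+1) + (1 + 3*(2*k) + 1) + (1 + 3*(2*k+1) + 1) := by ring
      rw [this]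

lemma pI_big (n a : ℕ) (h : n < a) : pI ((n:ℤ) - a) = 0 := pI_neg (by omega)

lemma Xm_top_sum_big (n : ℕ) : n < (Xm 3 (n+2)).sum := by
  have hmem : (n+1) ∈ Xm 3 (n+2) := by
    rw [← Multiset.count_pos, count_Xm, if_pos ⟨by omega, by omega⟩]
    omega
  have := Multiset.single_le_sum (s := Xm 3 (n+2)) (fun x _ => Nat.zero_le x) _ hmem
  omega

lemma SG_eq (n : ℕ) :
    (S 3 n : ℤ) + (G 3 n : ℤ) = ∑ j ∈ Finset.range (n+2), (pI ((n:ℤ) - sfun 1 j) : ℤ) := by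
  have hS : (S 3 n : ℤ) = ∑ k ∈ Finset.range (n+1), (pI ((n:ℤ) - ((Xm 3 (k+1)).sum : ℕ)) : ℤ) := by
    rw [S_eq, Nat.cast_sum]
  rw [hS, G_eq, ← Finset.sum_add_distrib]
  have hterm : ∀ k ∈ Finset.range (n+1),
      ((pI ((n:ℤ) - ((Xm 3 (k+1)).sum : ℕ)) : ℤ)
        + ((pI ((n:ℤ) - (((Xm 3 (k+1)).sum : ℤ) + 2*((k+1 : ℕ) : ℤ))) : ℤ)
            - (pI ((n:ℤ) - ((Xm 3 (k+1+1)).sum : ℤ)) : ℤ)))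
      = ((pI ((n:ℤ) - ((Xm 3 (k+1)).sum : ℤ)) : ℤ) - (pI ((n:ℤ) - ((Xm 3 (k+1+1)).sum : ℤ)) : ℤ))
          + (pI ((n:ℤ) - (sfun 1 (k+1) : ℤ)) : ℤ) := by
    intro k _
    have harg : (n:ℤ) - (((Xm 3 (k+1)).sum : ℤ) + 2*((k+1 : ℕ) : ℤ)) = (n:ℤ) - (sfun 1 (k+1) : ℤ) := by
      rw [sfun_one]
      push_cast
      ring
    rw [harg]
    ring
  rw [Finset.sum_congr rfl hterm, Finset.sum_add_distrib]
  have htel : (∑ k ∈ Finset.range (n+1),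
      ((pI ((n:ℤ) - ((Xm 3 (k+1)).sum : ℤ)) : ℤ) - (pI ((n:ℤ) - ((Xm 3 (k+1+1)).sum : ℤ)) : ℤ)))
      = (pI ((n:ℤ) - ((Xm 3 (0+1)).sum : ℤ)) : ℤ) - (pI ((n:ℤ) - ((Xm 3 (n+1+1)).sum : ℤ)) : ℤ) := by
    exact Finset.sum_range_sub' (fun k => (pI ((n:ℤ) - ((Xm 3 (k+1)).sum : ℤ)) : ℤ)) (n+1)
  rw [htel]
  have hz : (pI ((n:ℤ) - ((Xm 3 (n+1+1)).sum : ℤ)) : ℤ) = 0 := by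
    rw [pI_big n _ (Xm_top_sum_big n)]
    rfl
  rw [hz, sub_zero]
  have h01 : (pI ((n:ℤ) - ((Xm 3 (0+1)).sum : ℤ)) : ℤ) = (pI ((n:ℤ) - (sfun 1 0 : ℤ)) : ℤ) := by
    have h1 : Xm 3 1 = 0 := by rw [Xm, Finset.Ico_self]; rfl
    rw [h1]
    simp [sfun]
  rw [h01, Finset.sum_range_succ' (fun j => (pI ((n:ℤ) - sfun 1 j) : ℤ)) (n+1), add_comm]

lemma sup_mem_of_ne_zero {s : Multiset ℕ} (h : s ≠ 0) : s.sup ∈ s := by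
  induction s using Multiset.induction_on with
  | empty => exact absurd rfl h
  | cons a t ih =>
      rw [Multiset.sup_cons]
      rcases em (t = 0) with rfl | ht
      · simp
      · rcases le_total a t.sup with h1 | h1
        · rw [sup_eq_right.2 h1]; exact Multiset.mem_cons_of_mem (ih ht)
        · rw [sup_eq_left.2 h1]; exact Multiset.mem_cons_self a t

lemma sum_map_pred {s : Multiset ℕ} (hs : ∀ x ∈ s, 1 ≤ x) :
    (s.map (· - 1)).sum + Multiset.card s = s.sum := by
  induction s using Multiset.induction_on with
  | empty => simp
  | cons a t ih =>
      have ha : 1 ≤ a := hs a (Multiset.mem_cons_self a t)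
      have ht : ∀ x ∈ t, 1 ≤ x := fun x hx => hs x (Multiset.mem_cons_of_mem hx)
      simp only [Multiset.map_cons, Multiset.sum_cons, Multiset.card_cons]
      have := ih ht
      omega

lemma sum_map_succ (s : Multiset ℕ) :
    (s.map (· + 1)).sum = s.sum + Multiset.card s := by
  induction s using Multiset.induction_on with
  | empty => simp
  | cons a t ih =>
      simp only [Multiset.map_cons, Multiset.sum_cons, Multiset.card_cons]
      omega

lemma map_pred_succ {s : Multiset ℕ} (hs : ∀ x ∈ s, 1 ≤ x) :
    (s.map (· - 1)).map (· + 1) = s := by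
  rw [Multiset.map_map]
  have h : Multiset.map ((fun x => x + 1) ∘ (fun x => x - 1)) s = Multiset.map id s :=
    Multiset.map_congr rfl (fun x hx => by
      have := hs x hx
      simp only [Function.comp_apply, id_eq]
      omega)
  rw [h, Multiset.map_id]

lemma map_succ_pred (s : Multiset ℕ) : (s.map (· + 1)).map (· - 1) = s := by
  rw [Multiset.map_map]
  have h : Multiset.map ((fun x => x - 1) ∘ (fun x => x + 1)) s = Multiset.map id s :=
    Multiset.map_congr rfl (fun x hx => by
      simp only [Function.comp_apply, id_eq]
      omega)
  rw [h, Multiset.map_id]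

lemma split_ones {s : Multiset ℕ} (hs : ∀ x ∈ s, 0 < x) :
    s.filter (fun y => 2 ≤ y) + Multiset.replicate (s.count 1) 1 = s := by
  have h2 : s.filter (fun y => ¬ 2 ≤ y) = Multiset.replicate (s.count 1) 1 := by
    ext i
    rw [Multiset.count_filter, Multiset.count_replicate]
    rcases em (i = 1) with rfl | hi
    · rw [if_pos (by omega), if_pos rfl]
    · rcases Nat.eq_zero_or_pos i with rfl | hip
      · rw [if_pos (by omega), if_neg (by omega),
          Multiset.count_eq_zero_of_notMem (fun h => by have := hs 0 h; omega)]
      · rw [if_neg (by omega), if_neg (by omega)]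
  rw [← h2, Multiset.filter_add_not]

/-- Dyson map, forward direction, on part multisets. -/
def dyFwd (m : ℕ) (s : Multiset ℕ) : Multiset ℕ :=
  Multiset.filter (fun x => 0 < x)
    ((Multiset.card s - (m+1)) ::ₘ (s.filter (fun y => 2 ≤ y)).map (· - 1))

/-- Dyson map, backward direction, on part multisets. -/
def dyBwd (m : ℕ) (s : Multiset ℕ) : Multiset ℕ :=
  (s.erase s.sup).map (· + 1)
    + Multiset.replicate ((s.sup + m + 1) - Multiset.card (s.erase s.sup)) 1

section dyson
variable {m : ℕ} {s : Multiset ℕ}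

lemma filter_two_pos : ∀ x ∈ (s.filter (fun y => 2 ≤ y)).map (· - 1), 0 < x := by
  intro x hx
  rw [Multiset.mem_map] at hx
  obtain ⟨y, hy, rfl⟩ := hx
  have := (Multiset.mem_filter.1 hy).2
  omega

lemma dyFwd_eq_cases (hm : 1 ≤ m) (hpos : ∀ x ∈ s, 0 < x)
    (hrank : s.sup + m ≤ Multiset.card s) :
    (Multiset.card s = m + 1 ∧ dyFwd m s = 0 ∧ s = Multiset.replicate (m+1) 1) ∨
    (m + 1 < Multiset.card s ∧
      dyFwd m s = (Multiset.card s - (m+1)) ::ₘ (s.filter (fun y => 2 ≤ y)).map (· - 1)) := by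
  have hs0 : s ≠ 0 := by
    intro h
    rw [h] at hrank
    simp [Multiset.sup_zero] at hrank
    omega
  have hsup : 1 ≤ s.sup := by
    obtain ⟨a, ha⟩ := Multiset.exists_mem_of_ne_zero hs0
    exact le_trans (hpos a ha) (Multiset.le_sup ha)
  have hcards : m + 1 ≤ Multiset.card s := by omega
  rcases em (Multiset.card s = m + 1) with he | hne
  · left
    have hsup1 : ∀ x ∈ s, x = 1 := by
      intro x hx
      have h1 := hpos x hx
      have h2 := Multiset.le_sup hx
      omega
    have hs : s = Multiset.replicate (m+1) 1 := by
      rw [Multiset.eq_replicate]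
      exact ⟨he, hsup1⟩
    refine ⟨he, ?_, hs⟩
    have hf : s.filter (fun y => 2 ≤ y) = 0 := by
      rw [Multiset.filter_eq_nil]
      intro a ha
      have := hsup1 a ha
      omega
    rw [dyFwd, hf, he]
    rw [Multiset.map_zero, Nat.sub_self]
    rw [show ((0 : ℕ) ::ₘ 0) = (0 : ℕ) ::ₘ (0 : Multiset ℕ) from rfl]
    rw [Multiset.filter_cons_of_neg _ (by omega), Multiset.filter_zero]
  · right
    refine ⟨by omega, ?_⟩
    rw [dyFwd, Multiset.filter_cons_of_pos _ (by omega : 0 < Multiset.card s - (m+1)),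
      Multiset.filter_eq_self.2 filter_two_pos]
end dyson

section dyson2
variable {m : ℕ} {s : Multiset ℕ}

lemma dyFwd_pos : ∀ x ∈ dyFwd m s, 0 < x := by
  intro x hx
  exact (Multiset.mem_filter.1 hx).2

lemma card_sum_split (hpos : ∀ x ∈ s, 0 < x) :
    (s.filter (fun y => 2 ≤ y)).sum + s.count 1 = s.sum
      ∧ Multiset.card (s.filter (fun y => 2 ≤ y)) + s.count 1 = Multiset.card s := by
  have h := split_ones hpos
  constructor
  · have := congrArg Multiset.sum h
    rw [Multiset.sum_add, Multiset.sum_replicate, smul_eq_mul, mul_one] at this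
    exact this
  · have := congrArg (fun u => Multiset.card u) h
    simp only [Multiset.card_add, Multiset.card_replicate] at this
    exact this

lemma dyFwd_sum (hm : 1 ≤ m) (hpos : ∀ x ∈ s, 0 < x)
    (hrank : s.sup + m ≤ Multiset.card s) :
    (dyFwd m s).sum + (m+1) = s.sum := by
  rcases dyFwd_eq_cases hm hpos hrank with ⟨hc, he, hs⟩ | ⟨hc, he⟩
  · rw [he, hs, Multiset.sum_replicate, smul_eq_mul, mul_one]
    simp
  · rw [he, Multiset.sum_cons]
    obtain ⟨h1, h2⟩ := card_sum_split hpos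
    have h3 := sum_map_pred (s := s.filter (fun y => 2 ≤ y))
      (fun x hx => by have := (Multiset.mem_filter.1 hx).2; omega)
    have h4 : Multiset.card (s.filter (fun y => 2 ≤ y)) ≤ Multiset.card s :=
      Multiset.card_le_card (Multiset.filter_le _ s)
    omega

lemma dyFwd_rank (hm : 1 ≤ m) (hpos : ∀ x ∈ s, 0 < x)
    (hrank : s.sup + m ≤ Multiset.card s) :
    Multiset.card (dyFwd m s) ≤ (dyFwd m s).sup + m + 2 := by
  rcases dyFwd_eq_cases hm hpos hrank with ⟨hc, he, hs⟩ | ⟨hc, he⟩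
  · rw [he]; simp
  · rw [he]
    have hsup : Multiset.card s - (m+1) ≤ ((Multiset.card s - (m+1)) ::ₘ
        (s.filter (fun y => 2 ≤ y)).map (· - 1)).sup :=
      Multiset.le_sup (Multiset.mem_cons_self _ _)
    have h4 : Multiset.card (s.filter (fun y => 2 ≤ y)) ≤ Multiset.card s :=
      Multiset.card_le_card (Multiset.filter_le _ s)
    rw [Multiset.card_cons, Multiset.card_map]
    omega

lemma dyBwd_pos (hpos : ∀ x ∈ s, 0 < x) : ∀ x ∈ dyBwd m s, 0 < x := by
  intro x hx
  rw [dyBwd, Multiset.mem_add] at hx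
  rcases hx with hx | hx
  · rw [Multiset.mem_map] at hx
    obtain ⟨y, _, rfl⟩ := hx
    omega
  · rw [Multiset.eq_of_mem_replicate hx]
    omega

lemma dyBwd_card_le (hrank : Multiset.card s ≤ s.sup + m + 2) :
    Multiset.card (s.erase s.sup) ≤ s.sup + m + 1 := by
  rcases em (s = 0) with rfl | hs0
  · simp
  · rw [Multiset.card_erase_of_mem (sup_mem_of_ne_zero hs0)]
    have h1 : 1 ≤ Multiset.card s := Multiset.card_pos.2 hs0
    rw [Nat.pred_eq_sub_one]
    omega

lemma dyBwd_card (hrank : Multiset.card s ≤ s.sup + m + 2) :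
    Multiset.card (dyBwd m s) = s.sup + m + 1 := by
  have h := dyBwd_card_le (m := m) hrank
  rw [dyBwd, Multiset.card_add, Multiset.card_map, Multiset.card_replicate]
  omega

lemma erase_sup_sum (hs0 : s ≠ 0) : (s.erase s.sup).sum + s.sup = s.sum := by
  have h := Multiset.cons_erase (sup_mem_of_ne_zero hs0)
  have := congrArg Multiset.sum h
  rw [Multiset.sum_cons] at this
  omega

lemma dyBwd_sum (hrank : Multiset.card s ≤ s.sup + m + 2) :
    (dyBwd m s).sum = s.sum + (m+1) := by
  have h := dyBwd_card_le (m := m) hrank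
  rw [dyBwd, Multiset.sum_add, Multiset.sum_replicate, smul_eq_mul, mul_one, sum_map_succ]
  rcases em (s = 0) with rfl | hs0
  · simp
  · have h2 := erase_sup_sum hs0
    omega

lemma dyBwd_rank (hpos : ∀ x ∈ s, 0 < x) (hrank : Multiset.card s ≤ s.sup + m + 2) :
    (dyBwd m s).sup + m ≤ Multiset.card (dyBwd m s) := by
  rw [dyBwd_card hrank]
  have hsup : (dyBwd m s).sup ≤ s.sup + 1 := by
    rw [Multiset.sup_le]
    intro x hx
    rw [dyBwd, Multiset.mem_add] at hx
    rcases hx with hx | hx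
    · rw [Multiset.mem_map] at hx
      obtain ⟨y, hy, rfl⟩ := hx
      have hys : y ∈ s := Multiset.mem_of_mem_erase hy
      have := Multiset.le_sup hys
      omega
    · rw [Multiset.eq_of_mem_replicate hx]
      rcases em (s = 0) with rfl | hs0
      · simp
      · obtain ⟨a, ha⟩ := Multiset.exists_mem_of_ne_zero hs0
        have := le_trans (hpos a ha) (Multiset.le_sup ha)
        omega
  omega

lemma dyRT1 (hm : 1 ≤ m) (hpos : ∀ x ∈ s, 0 < x)
    (hrank : s.sup + m ≤ Multiset.card s) :
    dyBwd m (dyFwd m s) = s := by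
  rcases dyFwd_eq_cases hm hpos hrank with ⟨hc, he, hs⟩ | ⟨hc, he⟩
  · rw [he, hs, dyBwd]
    simp
  · set f := s.filter (fun y => 2 ≤ y) with hf
    set h0 := Multiset.card s - (m+1) with hh0
    have hsupt : ∀ x ∈ f.map (· - 1), x ≤ h0 := by
      intro x hx
      rw [Multiset.mem_map] at hx
      obtain ⟨y, hy, rfl⟩ := hx
      have hys : y ∈ s := Multiset.mem_of_le (Multiset.filter_le _ s) hy
      have := Multiset.le_sup hys
      omega
    have hsup : (h0 ::ₘ f.map (· - 1)).sup = h0 := by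
      rw [Multiset.sup_cons, sup_eq_left]
      rw [Multiset.sup_le]
      exact hsupt
    rw [he, dyBwd, hsup, Multiset.erase_cons_head, map_pred_succ
      (fun x hx => by have := (Multiset.mem_filter.1 hx).2; omega),
      Multiset.card_map]
    obtain ⟨h1, h2⟩ := card_sum_split hpos
    rw [← hf] at h2
    have hcount : h0 + m + 1 - Multiset.card f = s.count 1 := by omega
    rw [hcount, hf, split_ones hpos]

lemma dyRT2 (hm : 1 ≤ m) (hpos : ∀ x ∈ s, 0 < x)
    (hrank : Multiset.card s ≤ s.sup + m + 2) :
    dyFwd m (dyBwd m s) = s := by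
  have hcard := dyBwd_card (m := m) hrank
  have hw_pos : ∀ y ∈ s.erase s.sup, 0 < y :=
    fun y hy => hpos y (Multiset.mem_of_mem_erase hy)
  have hfil : (dyBwd m s).filter (fun y => 2 ≤ y) = (s.erase s.sup).map (· + 1) := by
    rw [dyBwd, Multiset.filter_add]
    rw [Multiset.filter_eq_self.2 (fun x hx => by
      rw [Multiset.mem_map] at hx
      obtain ⟨y, hy, rfl⟩ := hx
      have := hw_pos y hy
      omega)]
    rw [Multiset.filter_eq_nil.2 (fun a ha => by
      rw [Multiset.eq_of_mem_replicate ha]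
      omega), add_zero]
  rw [dyFwd, hfil, map_succ_pred, hcard]
  have hb : s.sup + m + 1 - (m + 1) = s.sup := by omega
  rw [hb]
  rcases em (s = 0) with rfl | hs0
  · rw [show ((0 : Multiset ℕ).sup) = 0 from rfl, Multiset.erase_zero]
    rw [show ((0 : ℕ) ::ₘ (0 : Multiset ℕ)) = {0} from rfl]
    rw [show (Multiset.filter (fun x => 0 < x) ({0} : Multiset ℕ)) = 0 from rfl]
  · have hbpos : 0 < s.sup := by
      obtain ⟨a, ha⟩ := Multiset.exists_mem_of_ne_zero hs0
      exact lt_of_lt_of_le (hpos a ha) (Multiset.le_sup ha)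
    rw [Multiset.filter_cons_of_pos _ hbpos, Multiset.filter_eq_self.2 hw_pos,
      Multiset.cons_erase (sup_mem_of_ne_zero hs0)]

end dyson2


/-- `Fc m n` counts partitions of `n` with rank `≤ -m`. -/
noncomputable def Fc (m n : ℕ) : ℕ :=
  Nat.card {lam : Nat.Partition n // lam.parts.sup + m ≤ Multiset.card lam.parts}

lemma card_le_sum_parts {n : ℕ} (lam : Nat.Partition n) : Multiset.card lam.parts ≤ n := by
  have h : Multiset.card lam.parts • 1 ≤ lam.parts.sum :=
    Multiset.card_nsmul_le_sum (fun x hx => lam.parts_pos hx)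
  rw [lam.parts_sum, smul_eq_mul, mul_one] at h
  exact h

lemma Fc_zero {m n : ℕ} (hm : 1 ≤ m) (hn : n ≤ m) : Fc m n = 0 := by
  rw [Fc]
  have : IsEmpty {lam : Nat.Partition n // lam.parts.sup + m ≤ Multiset.card lam.parts} := by
    constructor
    rintro ⟨lam, hrank⟩
    rcases em (lam.parts = 0) with h0 | h0
    · rw [h0] at hrank
      simp at hrank
      omega
    · obtain ⟨a, ha⟩ := Multiset.exists_mem_of_ne_zero h0
      have h1 := lam.parts_pos ha
      have h2 := Multiset.le_sup ha
      have h3 := card_le_sum_parts lam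
      omega
  rw [Nat.card_of_isEmpty]

lemma card_compl_split {n : ℕ} (p : Nat.Partition n → Prop) [DecidablePred p] :
    Nat.card {lam : Nat.Partition n // p lam} + Nat.card {lam : Nat.Partition n // ¬ p lam}
      = Nat.card (Nat.Partition n) := by
  classical
  rw [natcard_eq_filter, natcard_eq_filter, Nat.card_eq_fintype_card, ← Finset.card_univ]
  exact Finset.card_filter_add_card_filter_not _

lemma dyson_card {m n : ℕ} (hm : 1 ≤ m) (hn : m + 1 ≤ n) :
    Fc m n = Nat.card {nu : Nat.Partition (n - (m+1)) //
      Multiset.card nu.parts ≤ nu.parts.sup + m + 2} := by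
  apply Nat.card_congr
  refine
    { toFun := fun lam => ⟨⟨dyFwd m lam.1.parts, fun {i} hi => dyFwd_pos i hi, ?_⟩, ?_⟩
      invFun := fun nu => ⟨⟨dyBwd m nu.1.parts, fun {i} hi => dyBwd_pos
        (fun x hx => nu.1.parts_pos hx) i hi, ?_⟩, ?_⟩
      left_inv := ?_
      right_inv := ?_ }
  · have := dyFwd_sum hm (fun x hx => lam.1.parts_pos hx) lam.2
    rw [lam.1.parts_sum] at this
    omega
  · exact dyFwd_rank hm (fun x hx => lam.1.parts_pos hx) lam.2
  · have := dyBwd_sum (m := m) nu.2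
    rw [nu.1.parts_sum] at this
    rw [this]
    omega
  · exact dyBwd_rank (fun x hx => nu.1.parts_pos hx) nu.2
  · rintro ⟨lam, hlam⟩
    apply Subtype.ext
    apply Nat.Partition.ext
    exact dyRT1 hm (fun x hx => lam.parts_pos hx) hlam
  · rintro ⟨nu, hnu⟩
    apply Subtype.ext
    apply Nat.Partition.ext
    exact dyRT2 hm (fun x hx => nu.parts_pos hx) hnu

lemma Fc_rec {m : ℕ} (hm : 1 ≤ m) (n : ℕ) :
    (Fc m n : ℤ) = pI ((n : ℤ) - (m+1)) - Fc (m+3) (n - (m+1)) := by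
  rcases lt_or_ge n (m+1) with h | h
  · rw [Fc_zero hm (by omega), Fc_zero (by omega) (by omega), pI_neg (by omega)]
    simp
  · have hN : ((n - (m+1) : ℕ) : ℤ) = (n : ℤ) - (m+1) := by omega
    rw [dyson_card hm h, ← hN, pI_nonneg]
    have hsplit := card_compl_split (n := n - (m+1))
      (fun nu => Multiset.card nu.parts ≤ nu.parts.sup + m + 2)
    have hFc : Fc (m+3) (n - (m+1)) = Nat.card {nu : Nat.Partition (n - (m+1)) //
        ¬ (Multiset.card nu.parts ≤ nu.parts.sup + m + 2)} := by
      rw [Fc]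
      apply Nat.card_congr
      apply Equiv.subtypeEquivRight
      intro nu
      constructor
      · intro h1; omega
      · intro h1; omega
    rw [hFc]
    omega

lemma sfun_lb (m j : ℕ) : m + 1 ≤ sfun m (j+1) := by
  rw [sfun]
  omega

lemma Fc_formula : ∀ n m : ℕ, 1 ≤ m →
    (Fc m n : ℤ) = ∑ j ∈ Finset.range (n+1), (-1)^j * (pI ((n:ℤ) - sfun m (j+1)) : ℤ) := by
  intro n
  induction n using Nat.strong_induction_on with
  | _ n ih =>
    intro m hm
    rcases lt_or_ge n (m+1) with h | h
    · rw [Fc_zero hm (by omega)]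
      rw [Finset.sum_eq_zero, Nat.cast_zero]
      intro j _
      have := sfun_lb m j
      rw [pI_neg (by omega)]
      simp
    · set N := n - (m+1) with hNdef
      have hNlt : N < n := by omega
      have hcast : ((N : ℕ) : ℤ) = (n : ℤ) - (m+1) := by omega
      rw [Fc_rec hm n, ih N hNlt (m+3) (by omega)]
      rw [Finset.sum_range_succ' (fun j => (-1)^j * (pI ((n:ℤ) - sfun m (j+1)) : ℤ)) n]
      have h0 : (-1:ℤ)^0 * (pI ((n:ℤ) - sfun m (0+1)) : ℤ) = pI ((n:ℤ) - (m+1)) := by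
        have : sfun m 1 = m + 1 := by rw [sfun]; simp [sfun]
        rw [this]
        push_cast
        ring
      rw [h0]
      have hterm : ∀ j, (-1:ℤ)^(j+1) * (pI ((n:ℤ) - sfun m (j+1+1)) : ℤ)
          = -((-1)^j * (pI ((N:ℤ) - sfun (m+3) (j+1)) : ℤ)) := by
        intro j
        have hsh : sfun m (j+2) = (m+1) + sfun (m+3) (j+1) := sfun_shift m (j+1)
        have harg : (n:ℤ) - sfun m (j+1+1) = (N:ℤ) - sfun (m+3) (j+1) := by
          rw [show j+1+1 = j+2 from rfl, hsh, hcast]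
          push_cast
          ring
        rw [harg, pow_succ]
        ring
      rw [Finset.sum_congr rfl (fun j _ => hterm j), Finset.sum_neg_distrib]
      have hext : ∑ j ∈ Finset.range (N+1), (-1:ℤ)^j * (pI ((N:ℤ) - sfun (m+3) (j+1)) : ℤ)
          = ∑ j ∈ Finset.range n, (-1:ℤ)^j * (pI ((N:ℤ) - sfun (m+3) (j+1)) : ℤ) := by
        apply Finset.sum_subset
        · exact Finset.range_subset_range.2 (by omega)
        · intro j _ hj
          rw [Finset.mem_range] at hj
          have := sfun_ge (m+3) (by omega) (j+1)
          rw [pI_neg (by omega)]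
          simp
      rw [← hext]
      ring


lemma R_eq (n : ℕ) : (R n : ℤ) = (pI (n:ℤ) : ℤ) - Fc 1 n := by
  have hiff : ∀ lam : Nat.Partition n,
      ((Multiset.card lam.parts : ℤ) ≤ (lam.parts.sup : ℤ))
        ↔ ¬ (lam.parts.sup + 1 ≤ Multiset.card lam.parts) := by
    intro lam
    constructor
    · intro h1
      have : Multiset.card lam.parts ≤ lam.parts.sup := by exact_mod_cast h1
      omega
    · intro h1
      have : Multiset.card lam.parts ≤ lam.parts.sup := by omega
      exact_mod_cast this
  have hR : R n = Nat.card {lam : Nat.Partition n //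
      ¬ (lam.parts.sup + 1 ≤ Multiset.card lam.parts)} := by
    rw [R]
    exact Nat.card_congr (Equiv.subtypeEquivRight hiff)
  have hsplit := card_compl_split (n := n)
    (fun lam => lam.parts.sup + 1 ≤ Multiset.card lam.parts)
  rw [pI_nonneg]
  rw [hR]
  rw [Fc]
  omega

lemma sum_range_pair (h : ℕ → ℤ) (M : ℕ) :
    ∑ j ∈ Finset.range (2*M), h j = ∑ k ∈ Finset.range M, (h (2*k) + h (2*k+1)) := by
  induction M with
  | zero => simp
  | succ M ih =>
      have h2 : 2*(M+1) = (2*M + 1) + 1 := by ring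
      rw [h2, Finset.sum_range_succ, Finset.sum_range_succ, ih, Finset.sum_range_succ]
      ring

lemma main_int (n : ℕ) :
    2 * ∑ k ∈ Finset.range (n+1), (pI ((n:ℤ) - sfun 1 (2*k)) : ℤ)
      = (S 3 n : ℤ) + (G 3 n : ℤ) + (R n : ℤ) := by
  have hR : (R n : ℤ) = ∑ j ∈ Finset.range (n+2), (-1)^j * (pI ((n:ℤ) - sfun 1 j) : ℤ) := by
    rw [R_eq, Fc_formula n 1 (by omega)]
    rw [Finset.sum_range_succ' (fun j => (-1:ℤ)^j * (pI ((n:ℤ) - sfun 1 j) : ℤ)) (n+1)]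
    have h0 : (-1:ℤ)^0 * (pI ((n:ℤ) - sfun 1 0) : ℤ) = pI (n:ℤ) := by
      rw [show sfun 1 0 = 0 from rfl]
      push_cast
      ring
    rw [h0]
    have : ∑ j ∈ Finset.range (n+1), (-1:ℤ)^(j+1) * (pI ((n:ℤ) - sfun 1 (j+1)) : ℤ)
        = - ∑ j ∈ Finset.range (n+1), (-1:ℤ)^j * (pI ((n:ℤ) - sfun 1 (j+1)) : ℤ) := by
      rw [← Finset.sum_neg_distrib]
      apply Finset.sum_congr rfl
      intro j _
      rw [pow_succ]
      ring
    rw [this]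
    ring
  rw [hR, SG_eq]
  rw [← Finset.sum_add_distrib]
  have hpair : ∀ j : ℕ, (pI ((n:ℤ) - sfun 1 j) : ℤ) + (-1)^j * (pI ((n:ℤ) - sfun 1 j) : ℤ)
      = (1 + (-1)^j) * (pI ((n:ℤ) - sfun 1 j) : ℤ) := fun j => by ring
  rw [Finset.sum_congr rfl (fun j _ => hpair j)]
  have hbig : ∑ j ∈ Finset.range (n+2), (1 + (-1:ℤ)^j) * (pI ((n:ℤ) - sfun 1 j) : ℤ)
      = ∑ j ∈ Finset.range (2*(n+1)), (1 + (-1:ℤ)^j) * (pI ((n:ℤ) - sfun 1 j) : ℤ) := by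
    apply Finset.sum_subset
    · exact Finset.range_subset_range.2 (by omega)
    · intro j _ hj
      rw [Finset.mem_range] at hj
      have := sfun_ge 1 (le_refl 1) j
      rw [pI_neg (by omega)]
      simp
  rw [hbig, sum_range_pair]
  rw [Finset.mul_sum]
  apply Finset.sum_congr rfl
  intro k _
  have he : (-1:ℤ)^(2*k) = 1 := by
    rw [pow_mul]
    norm_num
  have ho : (-1:ℤ)^(2*k+1) = -1 := by
    rw [pow_succ, he]
    norm_num
  rw [he, ho]
  ring

theorem stmt17 (n : ℕ) :
    ∑' k : ℕ, (pI ((n : ℤ) - (k : ℤ) * (6 * k + 1)) : ℚ)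
      = ((S 3 n : ℚ) + G 3 n + R n) / 2 := by
  have htsum : ∑' k : ℕ, (pI ((n : ℤ) - (k : ℤ) * (6 * k + 1)) : ℚ)
      = ∑ k ∈ Finset.range (n+1), (pI ((n : ℤ) - (k : ℤ) * (6 * k + 1)) : ℚ) := by
    apply tsum_eq_sum
    intro k hk
    rw [Finset.mem_range] at hk
    have hkn : n + 1 ≤ k := by omega
    have : (pI ((n : ℤ) - (k : ℤ) * (6 * k + 1)) : ℕ) = 0 := by
      apply pI_neg
      have : (n : ℤ) < (k : ℤ) * (6 * k + 1) := by
        have h1 : (k:ℤ) ≤ (k:ℤ) * (6*k+1) := by nlinarith [Int.ofNat_nonneg k]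
        omega
      omega
    rw [this]
    simp
  have harg : ∀ k : ℕ, (n : ℤ) - (k : ℤ) * (6 * k + 1) = (n:ℤ) - sfun 1 (2*k) := by
    intro k
    rw [sfun_even]
    push_cast
    ring
  have hZ := main_int n
  rw [htsum]
  have hQ : ∑ k ∈ Finset.range (n+1), (pI ((n : ℤ) - (k : ℤ) * (6 * k + 1)) : ℚ)
      = ((∑ k ∈ Finset.range (n+1), (pI ((n:ℤ) - sfun 1 (2*k)) : ℤ) : ℤ) : ℚ) := by
    push_cast
    apply Finset.sum_congr rfl
    intro k _
    rw [harg k]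
  rw [hQ]
  rw [eq_div_iff (by norm_num : (2:ℚ) ≠ 0)]
  push_cast
  have := congrArg (fun z : ℤ => (z : ℚ)) hZ
  push_cast at this
  linarith [this]
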